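/- arXiv:1106.0686 — 2 statements merged into one kernel-verified Lean document; each statement's English description precedes it below -/
import Mathlib

section
/- Let α ∈ (0,1), μ ≥ 0, and V₀ ∈ ℝ, and define V(t) = V₀ · E_α(−μ t^α) for t ≥ 0. Then V(0) = V₀, and for every t > 0 the function s ↦ ∫₀ˢ g_{1−α}(s−τ)(V(τ) − V₀) dτ is differentiable at t with derivative equal to −μ V(t). In other words, V solves the fractional relaxation equation ∂_t^α(V − V₀) + μV = 0 on (0,∞) with V(0) = V₀, where ∂_t^α denotes the Riemann–Liouville fractional derivative ∂_t^α u(t) = d/dt ∫₀ᵗ g_{1−α}(t−τ) u(τ) dτ. -/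
open MeasureTheory Set

/-- The Riemann–Liouville kernel `g_β(t) = t^(β-1)/Γ(β)`. -/
noncomputable def rlKernel (β t : ℝ) : ℝ := t ^ (β - 1) / Real.Gamma β

/-- The Mittag-Leffler function `E_α(x) = Σ_{k=0}^∞ x^k / Γ(αk+1)` (real argument). -/
noncomputable def mittagLeffler (α x : ℝ) : ℝ := ∑' k : ℕ, x ^ k / Real.Gamma (α * k + 1)


section helpers
open Real Filter

lemma realBeta (b c : ℝ) (hb : 0 < b) (hc : 0 < c) :
    ∫ x in (0:ℝ)..1, x ^ (c-1) * (1-x) ^ (b-1) =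
      Real.Gamma c * Real.Gamma b / Real.Gamma (c + b) := by
  have hcb : (0:ℝ) < c + b := by linarith
  have hco : Complex.betaIntegral c b =
      ((∫ x in (0:ℝ)..1, x ^ (c-1) * (1-x) ^ (b-1) : ℝ) : ℂ) := by
    rw [Complex.betaIntegral, ← intervalIntegral.integral_ofReal]
    refine intervalIntegral.integral_congr fun x hx => ?_
    rw [Set.uIcc_of_le (by norm_num : (0:ℝ) ≤ 1)] at hx
    rw [show ((c:ℂ)-1) = ((c-1:ℝ):ℂ) by push_cast; ring,
      show (1-(x:ℂ)) = ((1-x:ℝ):ℂ) by push_cast; ring,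
      show ((b:ℂ)-1) = ((b-1:ℝ):ℂ) by push_cast; ring,
      ← Complex.ofReal_cpow hx.1 (c-1), ← Complex.ofReal_cpow (by linarith [hx.2]) (b-1)]
    push_cast
    ring
  have key := Complex.Gamma_mul_Gamma_eq_betaIntegral
    (s := (c:ℂ)) (t := (b:ℂ)) (by simpa using hc) (by simpa using hb)
  rw [hco] at key
  have : ((Real.Gamma c * Real.Gamma b : ℝ) : ℂ) =
      ((Real.Gamma (c+b) * ∫ x in (0:ℝ)..1, x ^ (c-1) * (1-x) ^ (b-1) : ℝ) : ℂ) := by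
    push_cast [← Complex.Gamma_ofReal]
    simpa using key
  have h2 := Complex.ofReal_injective this
  have hG : Real.Gamma (c+b) ≠ 0 := (Real.Gamma_pos_of_pos hcb).ne'
  field_simp
  linarith [h2]

lemma convInt (α p s : ℝ) (hα : 0 < α) (hα1 : α < 1) (hp : 0 < p) (hs : 0 < s) :
    IntervalIntegrable (fun τ => (s - τ) ^ (-α) * τ ^ p) volume 0 s := by
  have h1 : IntervalIntegrable (fun u : ℝ => u ^ (-α)) volume 0 s :=
    intervalIntegral.intervalIntegrable_rpow' (by linarith)
  have h2 : IntervalIntegrable (fun τ : ℝ => (s - τ) ^ (-α)) volume 0 s := by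
    exact (h1.comp_sub_left s |>.symm).mono_set (by simp)
  refine h2.mul_continuousOn ?_
  exact (Continuous.continuousOn (continuous_iff_continuousAt.mpr fun x =>
    Real.continuousAt_rpow_const x p (Or.inr hp.le)))

lemma convVal (α p s : ℝ) (hα : 0 < α) (hα1 : α < 1) (hp : 0 < p) (hs : 0 < s) :
    ∫ τ in (0:ℝ)..s, (s - τ) ^ (-α) * τ ^ p =
      Real.Gamma (p+1) * Real.Gamma (1-α) / Real.Gamma (p+2-α) * s ^ (p+1-α) := by
  have hsub := intervalIntegral.integral_comp_mul_left
    (a := 0) (b := 1) (fun τ => (s - τ) ^ (-α) * τ ^ p) (c := s) hs.ne'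
  simp only [mul_zero, mul_one] at hsub
  -- hsub : ∫ x in 0..1, (s - s*x)^(-α) * (s*x)^p = s⁻¹ • ∫ τ in 0..s, ...
  have heq : ∀ x ∈ Set.uIcc (0:ℝ) 1,
      (s - s*x) ^ (-α) * (s*x) ^ p = (s ^ (p-α)) * (x ^ p * (1-x) ^ (-α)) := by
    intro x hx
    rw [Set.uIcc_of_le (by norm_num : (0:ℝ) ≤ 1)] at hx
    rw [show s - s*x = s*(1-x) by ring,
      Real.mul_rpow hs.le (by linarith [hx.2]), Real.mul_rpow hs.le hx.1,
      show p - α = -α + p by ring, Real.rpow_add hs]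
    ring
  rw [intervalIntegral.integral_congr heq, intervalIntegral.integral_const_mul] at hsub
  have hbeta := realBeta (1-α) (p+1) (by linarith) (by linarith)
  simp only [show p+1-1 = p by ring, show (1:ℝ)-α-1 = -α by ring] at hbeta
  rw [hbeta] at hsub
  rw [smul_eq_mul] at hsub
  have : (∫ τ in (0:ℝ)..s, (s - τ) ^ (-α) * τ ^ p) =
      s * (s ^ (p-α) * (Real.Gamma (p+1) * Real.Gamma (1-α) / Real.Gamma (p+1+(1-α)))) := by
    field_simp at hsub ⊢
    linear_combination -hsub
  rw [this, show p+1+(1-α) = p+2-α by ring]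
  rw [show s * (s ^ (p-α) * (Real.Gamma (p+1) * Real.Gamma (1-α) / Real.Gamma (p+2-α)))
      = (Real.Gamma (p+1) * Real.Gamma (1-α) / Real.Gamma (p+2-α)) * (s ^ (p-α) * s) by ring]
  congr 1
  rw [show p+1-α = (p-α)+1 by ring, Real.rpow_add_one hs.ne']

lemma gammaRatio (α x : ℝ) (hα : 0 < α) (hα1 : α < 1) (hx : 1 ≤ x) :
    Real.Gamma x * x ≤ Real.Gamma (x+α) * (x+α) ^ (1-α) := by
  have hx0 : (0:ℝ) < x := by linarith
  have hxα : (0:ℝ) < x + α := by linarith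
  have hGx : 0 < Real.Gamma x := Real.Gamma_pos_of_pos hx0
  have hGxα : 0 < Real.Gamma (x+α) := Real.Gamma_pos_of_pos hxα
  have hGxα1 : 0 < Real.Gamma (x+α+1) := Real.Gamma_pos_of_pos (by linarith)
  have hconv := Real.convexOn_log_Gamma.2 (Set.mem_Ioi.mpr hxα)
    (Set.mem_Ioi.mpr (show (0:ℝ) < x+α+1 by linarith)) hα.le (by linarith : (0:ℝ) ≤ 1-α)
    (by ring)
  simp only [smul_eq_mul, Function.comp_apply] at hconv
  have harg : α * (x+α) + (1-α) * (x+α+1) = x + 1 := by ring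
  rw [harg] at hconv
  -- hconv : log Γ(x+1) ≤ α log Γ(x+α) + (1-α) log Γ(x+α+1)
  have h1 : Real.Gamma (x+1) = x * Real.Gamma x := Real.Gamma_add_one hx0.ne'
  have h2 : Real.Gamma (x+α+1) = (x+α) * Real.Gamma (x+α) := Real.Gamma_add_one hxα.ne'
  rw [h1, h2, Real.log_mul hxα.ne' hGxα.ne'] at hconv
  -- conclude
  have key : x * Real.Gamma x ≤ Real.Gamma (x+α) * (x+α) ^ (1-α) := by
    have := Real.exp_le_exp.mpr hconv
    rw [Real.exp_log (by positivity)] at this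
    calc x * Real.Gamma x ≤ Real.exp (α * Real.log (Real.Gamma (x+α))
          + (1-α) * (Real.log (x+α) + Real.log (Real.Gamma (x+α)))) := this
      _ = Real.Gamma (x+α) * (x+α) ^ (1-α) := by
          rw [show α * Real.log (Real.Gamma (x+α)) + (1-α) * (Real.log (x+α)
              + Real.log (Real.Gamma (x+α)))
            = Real.log (Real.Gamma (x+α)) + Real.log (x+α) * (1-α) by ring,
            Real.exp_add, Real.exp_log hGxα, ← Real.rpow_def_of_pos hxα]
  linarith

lemma summable_ML (α : ℝ) (hα : 0 < α) (hα1 : α < 1) (B : ℝ) (hB : 0 ≤ B) :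
    Summable (fun k : ℕ => B ^ k / Real.Gamma (α * k + 1)) := by
  refine summable_of_ratio_norm_eventually_le (r := 1/2) (by norm_num) ?_
  have htend : Tendsto (fun k : ℕ => (α * k + 1 : ℝ) ^ α) atTop atTop := by
    apply (tendsto_rpow_atTop hα).comp
    apply tendsto_atTop_add_const_right
    exact (tendsto_natCast_atTop_atTop (R := ℝ)).const_mul_atTop hα
  filter_upwards [htend.eventually_ge_atTop (4 * B)] with k hk
  set x : ℝ := α * k + 1 with hxdef
  have hx1 : (1:ℝ) ≤ x := by
    have : (0:ℝ) ≤ α * k := by positivity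
    simp only [hxdef]; linarith
  have hx0 : (0:ℝ) < x := by linarith
  have hxα : (0:ℝ) < x + α := by linarith
  have hGx : 0 < Real.Gamma x := Real.Gamma_pos_of_pos hx0
  have hGxα : 0 < Real.Gamma (x+α) := Real.Gamma_pos_of_pos hxα
  have hr := gammaRatio α x hα hα1 hx1
  -- (x+α)^(1-α) ≤ 2 * x^(1-α)
  have h2x : (x+α) ^ (1-α) ≤ 2 * x ^ (1-α) := by
    calc (x+α) ^ (1-α) ≤ (2*x) ^ (1-α) :=
          Real.rpow_le_rpow hxα.le (by linarith) (by linarith)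
      _ = 2 ^ (1-α) * x ^ (1-α) := Real.mul_rpow (by norm_num) hx0.le
      _ ≤ 2 * x ^ (1-α) := by
          have h21 : (2:ℝ) ^ (1-α) ≤ 2 ^ (1:ℝ) :=
            Real.rpow_le_rpow_of_exponent_le (by norm_num) (by linarith)
          have : (0:ℝ) ≤ x ^ (1-α) := Real.rpow_nonneg hx0.le _
          nlinarith [h21, Real.rpow_one (2:ℝ)]
  -- key : 2*B*Γ x ≤ Γ (x+α)
  have hxsplit : x ^ α * x ^ (1-α) = x := by
    rw [← Real.rpow_add hx0]; norm_num
  have hxpow : (0:ℝ) < x ^ (1-α) := Real.rpow_pos_of_pos hx0 _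
  have hkey : 2 * B * Real.Gamma x ≤ Real.Gamma (x+α) := by
    have h4B : 4 * B * x ^ (1-α) ≤ x := by
      calc 4 * B * x ^ (1-α) ≤ x ^ α * x ^ (1-α) :=
            mul_le_mul_of_nonneg_right hk hxpow.le
        _ = x := hxsplit
    nlinarith [hr, h2x, hGxα, hGx, hx0]
  -- finish
  have hGnext : Real.Gamma (α * (k+1:ℕ) + 1) = Real.Gamma (x+α) := by
    congr 1; push_cast; simp only [hxdef]; ring
  rw [Real.norm_eq_abs, Real.norm_eq_abs, abs_of_nonneg (by positivity),
    abs_of_nonneg (by positivity), hGnext, pow_succ]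
  rw [div_le_iff₀ hGxα, show (1:ℝ)/2 * (B^k / Real.Gamma x) * Real.Gamma (x+α)
      = (B^k * Real.Gamma (x+α)) / (2 * Real.Gamma x) by ring,
    le_div_iff₀ (by positivity)]
  nlinarith [mul_le_mul_of_nonneg_left hkey (pow_nonneg hB k)]

end helpers

open Real Filter in
set_option maxHeartbeats 1000000 in
/-- The function `V(t) = V₀ E_α(-μ t^α)` solves the fractional relaxation equation
`∂_t^α (V - V₀) + μ V = 0` on `(0,∞)` with `V(0) = V₀`, where `∂_t^α` is the
Riemann–Liouville fractional derivative. -/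
theorem mittagLeffler_solves_fractional_relaxation
    (α μ V₀ : ℝ) (hα : α ∈ Set.Ioo (0 : ℝ) 1) (hμ : 0 ≤ μ)
    (V : ℝ → ℝ) (hV : ∀ t ≥ (0 : ℝ), V t = V₀ * mittagLeffler α (-μ * t ^ α)) :
    V 0 = V₀ ∧
    ∀ t > (0 : ℝ),
      HasDerivAt (fun s => ∫ τ in (0 : ℝ)..s, rlKernel (1 - α) (s - τ) * (V τ - V₀))
        (-μ * V t) t := by

  obtain ⟨hα0, hα1⟩ := hα
  have hG1α : 0 < Real.Gamma (1 - α) := Real.Gamma_pos_of_pos (by linarith)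
  -- part 1
  have part1 : V 0 = V₀ := by
    rw [hV 0 le_rfl, Real.zero_rpow hα0.ne', mul_zero, mittagLeffler]
    rw [tsum_eq_single 0 (by intro k hk; rw [zero_pow hk, zero_div])]
    norm_num [Real.Gamma_one]
  refine ⟨part1, fun t ht => ?_⟩
  set R : ℝ := t + 1 with hRdef
  have hRt : t < R := by simp [hRdef]
  have hR0 : (0:ℝ) < R := by linarith
  have hR1 : (1:ℝ) ≤ R := by linarith
  -- the series and its derivative series
  set g : ℕ → ℝ → ℝ := fun k s => V₀ * (-μ)^(k+1) * s ^ (α*k+1) / Real.Gamma (α*k+2)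
    with hgdef
  set g' : ℕ → ℝ → ℝ := fun k s => V₀ * (-μ)^(k+1) * s ^ (α*k) / Real.Gamma (α*k+1)
    with hg'def
  have hΓpos : ∀ k : ℕ, 0 < Real.Gamma (α*k+1) := fun k =>
    Real.Gamma_pos_of_pos (by positivity)
  have hΓ2pos : ∀ k : ℕ, 0 < Real.Gamma (α*k+2) := fun k =>
    Real.Gamma_pos_of_pos (by positivity)
  have hΓrec : ∀ k : ℕ, Real.Gamma (α*k+2) = (α*k+1) * Real.Gamma (α*k+1) := by
    intro k
    rw [show α*k+2 = (α*k+1)+1 by ring, Real.Gamma_add_one (by positivity)]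
  have hRpow : ∀ k : ℕ, R ^ (α*(k:ℝ)) = (R^α)^k := by
    intro k
    rw [Real.rpow_mul hR0.le, Real.rpow_natCast]
  -- the uniform bound
  set u : ℕ → ℝ := fun k => |V₀| * μ^(k+1) * R ^ (α*(k:ℝ)) / Real.Gamma (α*k+1) with hudef
  have hu : Summable u := by
    have := (summable_ML α hα0 hα1 (μ * R^α) (by positivity)).mul_left (|V₀| * μ)
    refine this.congr fun k => ?_
    simp only [hudef, hRpow k, mul_pow]
    field_simp
    ring
  have hgderiv : ∀ (k : ℕ), ∀ s ∈ Set.Ioo (0:ℝ) R, HasDerivAt (g k) (g' k s) s := by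
    intro k s hs
    have h1 : HasDerivAt (fun x : ℝ => x ^ (α*k+1))
        ((α*k+1) * s ^ (α*(k:ℝ)+1-1)) s :=
      Real.hasDerivAt_rpow_const (Or.inl hs.1.ne')
    have h2 := (h1.const_mul (V₀ * (-μ)^(k+1))).div_const (Real.Gamma (α*k+2))
    refine h2.congr_deriv ?_
    rw [hg'def, show α*(k:ℝ)+1-1 = α*k by ring, hΓrec k]
    have := (hΓpos k).ne'
    field_simp
  have hgbound : ∀ (k : ℕ), ∀ s ∈ Set.Ioo (0:ℝ) R, ‖g' k s‖ ≤ u k := by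
    intro k s hs
    have habs : ‖g' k s‖ = |V₀| * μ^(k+1) * s ^ (α*(k:ℝ)) / Real.Gamma (α*k+1) := by
      rw [hg'def, Real.norm_eq_abs, abs_div, abs_of_pos (hΓpos k), abs_mul, abs_mul,
        abs_pow, abs_neg, abs_of_nonneg hμ,
        abs_of_nonneg (Real.rpow_nonneg hs.1.le _)]
    rw [habs, hudef]
    refine div_le_div₀ (by positivity) ?_ (hΓpos k) le_rfl
    have := mul_le_mul_of_nonneg_left
      (Real.rpow_le_rpow hs.1.le hs.2.le (by positivity : (0:ℝ) ≤ α*(k:ℝ)))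
      (by positivity : (0:ℝ) ≤ |V₀| * μ^(k+1))
    nlinarith [this]
  have hgsummable : ∀ s ∈ Set.Ioo (0:ℝ) R, Summable fun k => g k s := by
    intro s hs
    refine Summable.of_norm (Summable.of_nonneg_of_le (fun k => norm_nonneg _)
      (fun k => ?_) (hu.mul_right R))
    have habs : ‖g k s‖ = |V₀| * μ^(k+1) * s ^ (α*(k:ℝ)+1) / Real.Gamma (α*k+2) := by
      rw [hgdef, Real.norm_eq_abs, abs_div, abs_of_pos (hΓ2pos k), abs_mul, abs_mul,
        abs_pow, abs_neg, abs_of_nonneg hμ,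
        abs_of_nonneg (Real.rpow_nonneg hs.1.le _)]
    rw [habs, hudef]
    have hs1 : s ^ (α*(k:ℝ)+1) ≤ R ^ (α*(k:ℝ)) * R := by
      rw [← Real.rpow_add_one hR0.ne']
      exact Real.rpow_le_rpow hs.1.le hs.2.le (by positivity)
    have hΓle : Real.Gamma (α*k+1) ≤ Real.Gamma (α*k+2) := by
      rw [hΓrec k]
      nlinarith [hΓpos k, mul_nonneg (mul_nonneg hα0.le (Nat.cast_nonneg k : (0:ℝ) ≤ k))
        (hΓpos k).le]
    rw [div_mul_eq_mul_div]
    refine div_le_div₀ (by positivity) ?_ (hΓpos k) hΓle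
    have := mul_le_mul_of_nonneg_left hs1 (by positivity : (0:ℝ) ≤ |V₀| * μ^(k+1))
    nlinarith [this]
  -- the derivative of the series at t
  have htmem : t ∈ Set.Ioo (0:ℝ) R := ⟨ht, hRt⟩
  have hderiv : HasDerivAt (fun s => ∑' k, g k s) (∑' k, g' k t) t :=
    hasDerivAt_tsum_of_isPreconnected hu isOpen_Ioo (convex_Ioo _ _).isPreconnected
      hgderiv hgbound htmem (hgsummable t htmem) htmem
  -- the derivative value
  have hderivval : ∑' k, g' k t = -μ * V t := by
    rw [hV t ht.le, mittagLeffler, ← mul_assoc, mul_comm (-μ) V₀, mul_assoc,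
      show V₀ * (-μ * ∑' k : ℕ, (-μ*t^α)^k / Real.Gamma (α*k+1))
        = (V₀ * -μ) * ∑' k : ℕ, (-μ*t^α)^k / Real.Gamma (α*k+1) by ring,
      ← tsum_mul_left]
    refine tsum_congr fun k => ?_
    rw [hg'def]
    have hΓ := (hΓpos k).ne'
    rw [mul_pow, ← Real.rpow_natCast (t^α) k, ← Real.rpow_mul ht.le]
    field_simp
    ring
  -- Claim A : on (0,R) the integral equals the series
  have claimA : ∀ s ∈ Set.Ioo (0:ℝ) R,
      (∫ τ in (0:ℝ)..s, rlKernel (1-α) (s-τ) * (V τ - V₀)) = ∑' k, g k s := by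
    intro s hs
    have hs0 : (0:ℝ) < s := hs.1
    set h : ℕ → ℝ → ℝ := fun k τ => rlKernel (1-α) (s-τ) *
        (V₀ * (-μ)^(k+1) * τ ^ (α*((k:ℝ)+1)) / Real.Gamma (α*((k:ℝ)+1)+1)) with hhdef
    have hppos : ∀ k : ℕ, (0:ℝ) < α*((k:ℝ)+1) := fun k => by positivity
    have hΓppos : ∀ k : ℕ, 0 < Real.Gamma (α*((k:ℝ)+1)+1) := fun k =>
      Real.Gamma_pos_of_pos (by positivity)
    have hcomp : ∀ (k : ℕ) (τ : ℝ), h k τ =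
        (V₀*(-μ)^(k+1)/(Real.Gamma (1-α) * Real.Gamma (α*((k:ℝ)+1)+1))) *
          ((s-τ)^(-α) * τ^(α*((k:ℝ)+1))) := by
      intro k τ
      rw [hhdef]
      simp only [rlKernel, show (1:ℝ)-α-1 = -α from by ring]
      field_simp
    have hIk : ∀ k : ℕ, IntervalIntegrable (h k) volume 0 s := by
      intro k
      rw [show h k = fun τ => (V₀*(-μ)^(k+1)/(Real.Gamma (1-α) * Real.Gamma (α*((k:ℝ)+1)+1))) *
          ((s-τ)^(-α) * τ^(α*((k:ℝ)+1))) from funext (hcomp k)]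
      exact (convInt α (α*((k:ℝ)+1)) s hα0 hα1 (hppos k) hs0).const_mul _
    have hval : ∀ k : ℕ, (∫ τ in (0:ℝ)..s, h k τ) = g k s := by
      intro k
      rw [intervalIntegral.integral_congr (g := fun τ =>
          (V₀*(-μ)^(k+1)/(Real.Gamma (1-α) * Real.Gamma (α*((k:ℝ)+1)+1))) *
          ((s-τ)^(-α) * τ^(α*((k:ℝ)+1)))) (fun τ _ => hcomp k τ),
        intervalIntegral.integral_const_mul,
        convVal α (α*((k:ℝ)+1)) s hα0 hα1 (hppos k) hs0,
        show α*((k:ℝ)+1)+2-α = α*k+2 from by ring,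
        show α*((k:ℝ)+1)+1-α = α*k+1 from by ring, hgdef]
      have h1 := hG1α.ne'
      have h2 := (hΓppos k).ne'
      have h3 := (hΓ2pos k).ne'
      field_simp
    have hnorm : ∀ k : ℕ, (∫ τ in Set.Ioc (0:ℝ) s, ‖h k τ‖) =
        |V₀| * μ^(k+1) * s^(α*(k:ℝ)+1) / Real.Gamma (α*k+2) := by
      intro k
      have heqon : ∀ τ ∈ Set.Ioc (0:ℝ) s, ‖h k τ‖ =
          (|V₀| * μ^(k+1) / (Real.Gamma (1-α) * Real.Gamma (α*((k:ℝ)+1)+1))) *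
            ((s-τ)^(-α) * τ^(α*((k:ℝ)+1))) := by
        intro τ hτ
        rw [hcomp k τ, norm_mul, Real.norm_eq_abs, Real.norm_eq_abs, abs_div, abs_mul, abs_mul,
          abs_pow, abs_neg, abs_of_nonneg hμ,
          abs_of_pos hG1α, abs_of_pos (hΓppos k),
          abs_of_nonneg (mul_nonneg (Real.rpow_nonneg (by linarith [hτ.2] : (0:ℝ) ≤ s - τ) _)
            (Real.rpow_nonneg hτ.1.le _))]
      rw [MeasureTheory.setIntegral_congr_fun measurableSet_Ioc heqon,
        MeasureTheory.integral_const_mul, ← intervalIntegral.integral_of_le hs0.le,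
        convVal α (α*((k:ℝ)+1)) s hα0 hα1 (hppos k) hs0,
        show α*((k:ℝ)+1)+2-α = α*k+2 from by ring,
        show α*((k:ℝ)+1)+1-α = α*k+1 from by ring]
      have h1 := hG1α.ne'
      have h2 := (hΓppos k).ne'
      have h3 := (hΓ2pos k).ne'
      field_simp
    have hsum : Summable (fun k => ∫ τ in Set.Ioc (0:ℝ) s, ‖h k τ‖) := by
      simp only [hnorm]
      refine Summable.of_nonneg_of_le (fun k => by positivity) (fun k => ?_)
        ((summable_ML α hα0 hα1 (μ*s^α) (by positivity)).mul_left (|V₀| * μ * s))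
      have hspow : s ^ (α*(k:ℝ)+1) = (s^α)^k * s := by
        rw [← Real.rpow_natCast (s^α) k, ← Real.rpow_mul hs0.le, ← Real.rpow_add_one hs0.ne']
      have hΓle : Real.Gamma (α*k+1) ≤ Real.Gamma (α*k+2) := by
        rw [hΓrec k]
        nlinarith [hΓpos k, mul_nonneg (mul_nonneg hα0.le (Nat.cast_nonneg k : (0:ℝ) ≤ k))
          (hΓpos k).le]
      rw [show (|V₀| * μ * s) * ((μ*s^α)^k / Real.Gamma (α*k+1))
          = |V₀| * μ^(k+1) * ((s^α)^k * s) / Real.Gamma (α*k+1) from by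
            rw [mul_pow, pow_succ]; ring, ← hspow]
      exact div_le_div₀ (by positivity) le_rfl (hΓpos k) hΓle
    have hInt : ∀ k : ℕ, Integrable (h k) (volume.restrict (Set.Ioc (0:ℝ) s)) := fun k =>
      (intervalIntegrable_iff_integrableOn_Ioc_of_le hs0.le).mp (hIk k)
    have hexp : ∀ τ : ℝ, 0 < τ → V τ - V₀ =
        ∑' k : ℕ, V₀ * (-μ)^(k+1) * τ ^ (α*((k:ℝ)+1)) / Real.Gamma (α*((k:ℝ)+1)+1) := by
      intro τ hτ
      have hw : Summable (fun k : ℕ => V₀ * ((-μ*τ^α)^k / Real.Gamma (α*k+1))) := by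
        apply Summable.mul_left
        refine Summable.of_norm ?_
        refine (summable_ML α hα0 hα1 (μ*τ^α) (by positivity)).congr fun k => ?_
        rw [Real.norm_eq_abs, abs_div, abs_of_pos (hΓpos k), abs_pow, show -μ*τ^α = -(μ*τ^α)
          from by ring, abs_neg, abs_of_nonneg (by positivity)]
      rw [hV τ hτ.le, mittagLeffler, ← tsum_mul_left, Summable.tsum_eq_zero_add hw]
      simp only [pow_zero, Nat.cast_zero, mul_zero, zero_add, Real.Gamma_one, div_one, mul_one]
      rw [add_sub_cancel_left]
      refine tsum_congr fun k => ?_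
      rw [mul_pow, ← Real.rpow_natCast (τ^α) (k+1), ← Real.rpow_mul hτ.le]
      push_cast
      ring
    have hptwise : ∀ τ ∈ Set.Ioc (0:ℝ) s,
        rlKernel (1-α) (s-τ) * (V τ - V₀) = ∑' k, h k τ := by
      intro τ hτ
      rw [hexp τ hτ.1, ← tsum_mul_left]
    rw [intervalIntegral.integral_of_le hs0.le,
      MeasureTheory.setIntegral_congr_fun measurableSet_Ioc hptwise,
      ← MeasureTheory.integral_tsum_of_summable_integral_norm hInt hsum]
    exact tsum_congr fun k => by
      rw [← intervalIntegral.integral_of_le hs0.le]; exact hval k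
  rw [← hderivval]
  refine hderiv.congr_of_eventuallyEq ?_
  exact Filter.eventuallyEq_of_mem (Ioo_mem_nhds ht hRt) claimA
end

section
/- Let α > 0 and μ ∈ ℝ. Then for every t ≥ 0, E_α(−μ t^α) = 1 − μ ∫₀ᵗ g_α(t−s) · E_α(−μ s^α) ds; that is, the function u(t) = E_α(−μ t^α) solves the Volterra integral equation u(t) = 1 − μ (g_α ∗ u)(t) on [0,∞). -/
open MeasureTheory Set

lemma gamma_ratio {α x : ℝ} (hα : 0 < α) (hx : 2 ≤ x) :
    Real.Gamma x * (x - 1) ^ α ≤ Real.Gamma (x + α) := by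
  have hx1 : (1:ℝ) < x - 1 + 1 := by linarith
  have h0 : (0:ℝ) < x - 1 := by linarith
  have hxpos : (0:ℝ) < x := by linarith
  have hslope := Real.convexOn_log_Gamma.slope_mono_adjacent
    (x := x - 1) (y := x) (z := x + α)
    (by simp; linarith) (by simp; linarith) (by linarith) (by linarith)
  have hgam : Real.Gamma x = (x - 1) * Real.Gamma (x - 1) := by
    have := Real.Gamma_add_one h0.ne'
    rw [sub_add_cancel] at this
    exact this
  have hΓx : 0 < Real.Gamma x := Real.Gamma_pos_of_pos hxpos
  have hΓx1 : 0 < Real.Gamma (x - 1) := Real.Gamma_pos_of_pos h0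
  have hΓxa : 0 < Real.Gamma (x + α) := Real.Gamma_pos_of_pos (by linarith)
  simp only [Function.comp] at hslope
  have h1 : (Real.log (Real.Gamma x) - Real.log (Real.Gamma (x-1))) / (x - (x-1)) = Real.log (x-1) := by
    rw [hgam, Real.log_mul h0.ne' hΓx1.ne']
    ring
  rw [h1] at hslope
  have h2 : α * Real.log (x - 1) + Real.log (Real.Gamma x) ≤ Real.log (Real.Gamma (x + α)) := by
    have h3 : x + α - x = α := by ring
    rw [h3] at hslope
    have h4 := (le_div_iff₀ hα).mp hslope
    linarith [h4]
  calc Real.Gamma x * (x-1) ^ α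
      = Real.exp (Real.log (Real.Gamma x)) * Real.exp (Real.log (x-1) * α) := by
        rw [Real.exp_log hΓx, ← Real.rpow_def_of_pos h0]
    _ = Real.exp (α * Real.log (x-1) + Real.log (Real.Gamma x)) := by
        rw [← Real.exp_add]; ring_nf
    _ ≤ Real.exp (Real.log (Real.Gamma (x + α))) := Real.exp_le_exp.mpr h2
    _ = Real.Gamma (x + α) := Real.exp_log hΓxa

lemma summable_ml {α β : ℝ} (hα : 0 < α) (hβ : 0 < β) (x : ℝ) :
    Summable fun k : ℕ => x ^ k / Real.Gamma (α * k + β) := by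
  apply summable_of_ratio_norm_eventually_le (r := 1/2) (by norm_num)
  have hmul : Filter.Tendsto (fun k : ℕ => α * (k:ℝ)) Filter.atTop Filter.atTop :=
    (tendsto_natCast_atTop_atTop (R := ℝ)).const_mul_atTop hα
  have hbase : Filter.Tendsto (fun k : ℕ => α * (k:ℝ) + β - 1) Filter.atTop Filter.atTop := by
    have := Filter.tendsto_atTop_add_const_right Filter.atTop (β - 1) hmul
    exact this.congr (fun k => by ring)
  have htend : Filter.Tendsto (fun k : ℕ => (α * (k:ℝ) + β - 1) ^ α) Filter.atTop Filter.atTop :=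
    (tendsto_rpow_atTop hα).comp hbase
  have h2 : Filter.Tendsto (fun k : ℕ => α * (k:ℝ) + β) Filter.atTop Filter.atTop := by
    have := Filter.tendsto_atTop_add_const_right Filter.atTop β hmul
    exact this
  filter_upwards [htend.eventually_ge_atTop (2 * |x|), h2.eventually_ge_atTop 2] with k hk1 hk2
  have hy : (0:ℝ) < α * k + β := by positivity
  have hy1 : (0:ℝ) < α * k + β - 1 := by linarith
  have hΓ : 0 < Real.Gamma (α * k + β) := Real.Gamma_pos_of_pos hy
  have hΓ' : 0 < Real.Gamma (α * ((k:ℝ)+1) + β) := Real.Gamma_pos_of_pos (by positivity)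
  have hge : Real.Gamma (α * k + β) * (α * k + β - 1) ^ α ≤ Real.Gamma (α * ((k:ℝ)+1) + β) := by
    have := gamma_ratio hα hk2
    have harg : (α * (k:ℝ) + β) + α = α * ((k:ℝ)+1) + β := by ring
    rwa [harg] at this
  have hpow : (0:ℝ) < (α * k + β - 1) ^ α := Real.rpow_pos_of_pos hy1 _
  have hc : ((k:ℝ)+1) = ((k+1 : ℕ) : ℝ) := by push_cast; ring
  rw [hc] at hΓ' hge
  rw [norm_div, norm_div, Real.norm_eq_abs (Real.Gamma _), Real.norm_eq_abs (Real.Gamma _),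
    abs_of_pos hΓ, abs_of_pos hΓ', norm_pow, norm_pow, pow_succ]
  set A := ‖x‖ with hA
  set G := Real.Gamma (α * k + β)
  set G' := Real.Gamma (α * ((k+1:ℕ):ℝ) + β)
  set P := (α * (k:ℝ) + β - 1) ^ α
  have hA0 : 0 ≤ A := norm_nonneg _
  have h5 : A ^ k * A / G' ≤ A ^ k * A / (G * P) := by
    apply div_le_div_of_nonneg_left (by positivity) (by positivity) hge
  have h6 : A ^ k * A / (G * P) = A ^ k / G * (A / P) := by
    field_simp
  have h7 : A / P ≤ 1 / 2 := by
    rw [div_le_div_iff₀ hpow (by norm_num)]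
    rw [hA, Real.norm_eq_abs]
    linarith
  calc A ^ k * A / G' ≤ A ^ k / G * (A / P) := h6 ▸ h5
    _ ≤ A ^ k / G * (1/2) := by
        apply mul_le_mul_of_nonneg_left h7 (by positivity)
    _ = 1 / 2 * (A ^ k / G) := by ring

lemma beta_eval {a b t : ℝ} (ha : 0 < a) (hb : 0 < b) (ht : 0 < t) :
    ∫ s in (0:ℝ)..t, s ^ (a-1) * (t - s) ^ (b-1)
      = Real.Gamma a * Real.Gamma b / Real.Gamma (a+b) * t ^ (a+b-1) := by
  have hc := Complex.betaIntegral_scaled (a:ℂ) (b:ℂ) ht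
  have hcongr : (∫ x in (0:ℝ)..t, (x:ℂ) ^ ((a:ℂ) - 1) * ((t:ℂ) - x) ^ ((b:ℂ) - 1))
      = ((∫ s in (0:ℝ)..t, s ^ (a-1) * (t - s) ^ (b-1) : ℝ) : ℂ) := by
    rw [← intervalIntegral.integral_ofReal]
    apply intervalIntegral.integral_congr
    intro x hx
    rw [Set.uIcc_of_le ht.le] at hx
    have h2 : (0:ℝ) ≤ t - x := by linarith [hx.2]
    symm
    push_cast
    rw [Complex.ofReal_cpow hx.1, Complex.ofReal_cpow h2]
    push_cast
    ring
  rw [hcongr] at hc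
  have hra : 0 < ((a:ℂ)).re := by simpa using ha
  have hrb : 0 < ((b:ℂ)).re := by simpa using hb
  have hβ : Complex.betaIntegral (a:ℂ) (b:ℂ)
      = ((Real.Gamma a * Real.Gamma b / Real.Gamma (a+b) : ℝ) : ℂ) := by
    have hG := Complex.Gamma_mul_Gamma_eq_betaIntegral hra hrb
    have hab : Complex.Gamma ((a:ℂ) + (b:ℂ)) = ((Real.Gamma (a+b) : ℝ) : ℂ) := by
      rw [← Complex.ofReal_add, Complex.Gamma_ofReal]
    have hne : ((Real.Gamma (a+b) : ℝ) : ℂ) ≠ 0 := by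
      exact_mod_cast (Real.Gamma_pos_of_pos (by linarith : (0:ℝ) < a + b)).ne'
    rw [hab, Complex.Gamma_ofReal, Complex.Gamma_ofReal] at hG
    push_cast
    rw [eq_div_iff hne, mul_comm (Real.Gamma (a+b) : ℂ)] at *
    rw [← hG]
  rw [hβ] at hc
  have htc : ((t:ℂ)) ^ ((a:ℂ) + (b:ℂ) - 1) = ((t ^ (a+b-1) : ℝ) : ℂ) := by
    rw [Complex.ofReal_cpow ht.le]
    push_cast
    ring_nf
  rw [htc, ← Complex.ofReal_mul] at hc
  have hr : (∫ s in (0:ℝ)..t, s ^ (a-1) * (t - s) ^ (b-1))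
      = t ^ (a+b-1) * (Real.Gamma a * Real.Gamma b / Real.Gamma (a+b)) := by
    exact_mod_cast hc
  rw [hr]; ring

lemma beta_integrable {a b t : ℝ} (ha : 0 < a) (hb : 0 < b) (ht : 0 < t) :
    IntervalIntegrable (fun s => s ^ (a-1) * (t - s) ^ (b-1)) MeasureTheory.volume 0 t := by
  have hra : 0 < ((a:ℂ)).re := by simpa using ha
  have hrb : 0 < ((b:ℂ)).re := by simpa using hb
  have h0 := (Complex.betaIntegral_convergent hra hrb).comp_mul_right (c := t⁻¹)
  rw [zero_div, one_div, inv_inv] at h0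
  rw [intervalIntegrable_iff_integrableOn_Ioc_of_le ht.le] at h0 ⊢
  have h1 : IntegrableOn (fun x : ℝ =>
      (((x * t⁻¹ : ℝ):ℂ) ^ ((a:ℂ)-1) * ((1:ℂ) - ((x * t⁻¹ : ℝ):ℂ)) ^ ((b:ℂ)-1)).re)
      (Ioc 0 t) MeasureTheory.volume := h0.re
  have h2 := (h1.const_mul (t ^ (a-1) * t ^ (b-1)))
  apply h2.congr
  filter_upwards [MeasureTheory.ae_restrict_mem measurableSet_Ioc] with x hx
  have hx0 : (0:ℝ) ≤ x := hx.1.le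
  have hxt : x ≤ t := hx.2
  have hdiv0 : (0:ℝ) ≤ x * t⁻¹ := by positivity
  have hdiv1 : (0:ℝ) ≤ 1 - x * t⁻¹ := by
    rw [sub_nonneg, ← div_eq_mul_inv, div_le_one ht]
    exact hxt
  have e1 : ((1:ℂ) - ((x * t⁻¹ : ℝ):ℂ)) = ((1 - x * t⁻¹ : ℝ) : ℂ) := by push_cast; ring
  have ea : ((a:ℂ) - 1) = ((a - 1 : ℝ) : ℂ) := by push_cast; ring
  have eb : ((b:ℂ) - 1) = ((b - 1 : ℝ) : ℂ) := by push_cast; ring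
  rw [e1, ea, eb, ← Complex.ofReal_cpow hdiv0, ← Complex.ofReal_cpow hdiv1, ← Complex.ofReal_mul,
    Complex.ofReal_re]
  have e2 : (1 : ℝ) - x * t⁻¹ = (t - x) / t := by field_simp
  have e3 : x * t⁻¹ = x / t := by rw [div_eq_mul_inv]
  rw [e2, e3, Real.div_rpow hx0 ht.le, Real.div_rpow (by linarith) ht.le]
  have htpow : (0:ℝ) < t ^ (a-1) := Real.rpow_pos_of_pos ht _
  have htpow' : (0:ℝ) < t ^ (b-1) := Real.rpow_pos_of_pos ht _
  field_simp

/-- `u(t) = E_α(-μ t^α)` solves the Volterra integral equation `u = 1 - μ (g_α ∗ u)`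
on `[0,∞)`. -/
theorem mittagLeffler_volterra_equation (α μ : ℝ) (hα : 0 < α) :
    ∀ t ≥ (0 : ℝ),
      mittagLeffler α (-μ * t ^ α) =
        1 - μ * ∫ s in (0 : ℝ)..t, rlKernel α (t - s) * mittagLeffler α (-μ * s ^ α) := by
  intro t ht
  rcases eq_or_lt_of_le ht with h0 | htpos
  · subst h0
    rw [intervalIntegral.integral_same, mul_zero, sub_zero, Real.zero_rpow hα.ne', mul_zero,
      mittagLeffler]
    rw [tsum_eq_single 0 (fun b hb => by simp [zero_pow hb])]
    simp [Real.Gamma_one]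
  · have hΓα : (0:ℝ) < Real.Gamma α := Real.Gamma_pos_of_pos hα
    set c : ℕ → ℝ := fun k => (-μ)^k / (Real.Gamma α * Real.Gamma (α * k + 1)) with hc
    have hak : ∀ k : ℕ, (0:ℝ) < α * k + 1 := fun k => by positivity
    have hΓk : ∀ k : ℕ, (0:ℝ) < Real.Gamma (α * k + 1) := fun k => Real.Gamma_pos_of_pos (hak k)
    have hΓk' : ∀ k : ℕ, (0:ℝ) < Real.Gamma (α * k + α + 1) :=
      fun k => Real.Gamma_pos_of_pos (by positivity)
    have hGH : ∀ (k : ℕ), ∀ s ∈ Ioc (0:ℝ) t,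
        rlKernel α (t - s) * ((-μ * s ^ α) ^ k / Real.Gamma (α * k + 1))
          = c k * (s ^ (α * (k:ℝ) + 1 - 1) * (t - s) ^ (α - 1)) := by
      intro k s hs
      have h1 : α * (k:ℝ) + 1 - 1 = α * (k:ℝ) := by ring
      rw [rlKernel, h1, mul_pow, ← Real.rpow_natCast (s ^ α) k, ← Real.rpow_mul hs.1.le, hc]
      have := (hΓk k).ne'
      field_simp
    have hInt : ∀ k : ℕ, Integrable
        (fun s => rlKernel α (t - s) * ((-μ * s ^ α) ^ k / Real.Gamma (α * k + 1)))
        (volume.restrict (Ioc 0 t)) := by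
      intro k
      have hb := beta_integrable (hak k) hα htpos
      rw [intervalIntegrable_iff_integrableOn_Ioc_of_le htpos.le] at hb
      apply (hb.const_mul (c k)).congr
      filter_upwards [ae_restrict_mem measurableSet_Ioc] with s hs
      exact (hGH k s hs).symm
    have hbetaval : ∀ k : ℕ, ∫ s in Ioc (0:ℝ) t, s ^ (α * (k:ℝ) + 1 - 1) * (t - s) ^ (α - 1)
        = Real.Gamma (α * k + 1) * Real.Gamma α / Real.Gamma (α * k + α + 1)
          * t ^ (α * (k:ℝ) + α) := by
      intro k
      have hbe := beta_eval (hak k) hα htpos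
      rw [intervalIntegral.integral_of_le htpos.le] at hbe
      rw [hbe]
      have e1 : α * (k:ℝ) + 1 + α = α * k + α + 1 := by ring
      have e2 : α * (k:ℝ) + 1 + α - 1 = α * k + α := by ring
      rw [e2, e1]
    have hval : ∀ k : ℕ, ∫ s in Ioc (0:ℝ) t,
        rlKernel α (t - s) * ((-μ * s ^ α) ^ k / Real.Gamma (α * k + 1))
          = (-μ)^k * t ^ (α * (k:ℝ) + α) / Real.Gamma (α * (k:ℝ) + α + 1) := by
      intro k
      rw [setIntegral_congr_fun measurableSet_Ioc (hGH k), MeasureTheory.integral_const_mul,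
        hbetaval k, hc]
      have h1 := hΓα.ne'
      have h2 := (hΓk k).ne'
      have h3 := (hΓk' k).ne'
      field_simp
    have hnormval : ∀ k : ℕ, ∫ s in Ioc (0:ℝ) t,
        ‖rlKernel α (t - s) * ((-μ * s ^ α) ^ k / Real.Gamma (α * k + 1))‖
          = |μ|^k * t ^ (α * (k:ℝ) + α) / Real.Gamma (α * (k:ℝ) + α + 1) := by
      intro k
      have heq : ∀ s ∈ Ioc (0:ℝ) t,
          ‖rlKernel α (t - s) * ((-μ * s ^ α) ^ k / Real.Gamma (α * k + 1))‖
            = |c k| * (s ^ (α * (k:ℝ) + 1 - 1) * (t - s) ^ (α - 1)) := by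
        intro s hs
        rw [hGH k s hs, norm_mul, Real.norm_eq_abs, Real.norm_eq_abs,
          abs_of_nonneg (mul_nonneg (Real.rpow_nonneg hs.1.le _)
            (Real.rpow_nonneg (by linarith [hs.2] : (0:ℝ) ≤ t - s) _))]
      rw [setIntegral_congr_fun measurableSet_Ioc heq, MeasureTheory.integral_const_mul,
        hbetaval k, hc]
      simp only [abs_div, abs_pow, abs_neg, abs_mul, abs_of_pos hΓα, abs_of_pos (hΓk k)]
      have h1 := hΓα.ne'
      have h2 := (hΓk k).ne'
      have h3 := (hΓk' k).ne'
      field_simp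
    have hsum : Summable (fun k : ℕ => ∫ s in Ioc (0:ℝ) t,
        ‖rlKernel α (t - s) * ((-μ * s ^ α) ^ k / Real.Gamma (α * k + 1))‖) := by
      apply Summable.congr (((summable_ml hα (by positivity : (0:ℝ) < α + 1)
        (|μ| * t ^ α)).mul_left (t ^ α)))
      intro k
      rw [hnormval k]
      rw [mul_pow, ← Real.rpow_natCast (t ^ α) k, ← Real.rpow_mul htpos.le]
      rw [Real.rpow_add htpos (α * k) α]
      have e3 : α * (k:ℝ) + (α + 1) = α * k + α + 1 := by ring
      rw [e3]
      ring
    have hswap := MeasureTheory.integral_tsum_of_summable_integral_norm hInt hsum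
    rw [intervalIntegral.integral_of_le htpos.le]
    have hint_eq : ∫ s in Ioc (0:ℝ) t, rlKernel α (t - s) * mittagLeffler α (-μ * s ^ α)
        = ∑' k : ℕ, ((-μ)^k * t ^ (α * (k:ℝ) + α) / Real.Gamma (α * (k:ℝ) + α + 1)) := by
      have : (fun s => rlKernel α (t - s) * mittagLeffler α (-μ * s ^ α))
          = fun s => ∑' k : ℕ, rlKernel α (t - s) * ((-μ * s ^ α) ^ k / Real.Gamma (α * k + 1)) := by
        funext s
        rw [mittagLeffler, tsum_mul_left]
      rw [this, ← hswap]
      exact tsum_congr hval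
    rw [hint_eq]
    have hsummf : Summable (fun k : ℕ => (-μ * t ^ α) ^ k / Real.Gamma (α * k + 1)) :=
      summable_ml hα one_pos _
    rw [mittagLeffler, Summable.tsum_eq_zero_add hsummf]
    have h00 : (-μ * t ^ α) ^ (0:ℕ) / Real.Gamma (α * ((0:ℕ):ℝ) + 1) = 1 := by
      simp [Real.Gamma_one]
    rw [h00]
    have hshift : ∀ k : ℕ, (-μ * t ^ α) ^ (k+1) / Real.Gamma (α * (((k+1):ℕ):ℝ) + 1)
        = -μ * ((-μ)^k * t ^ (α * (k:ℝ) + α) / Real.Gamma (α * (k:ℝ) + α + 1)) := by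
      intro k
      have e1 : (α * (((k+1):ℕ):ℝ) + 1) = α * (k:ℝ) + α + 1 := by push_cast; ring
      have e2 : (t ^ α) ^ (k+1) = t ^ (α * (k:ℝ) + α) := by
        rw [← Real.rpow_natCast (t ^ α) (k+1), ← Real.rpow_mul htpos.le]
        congr 1
        push_cast
        ring
      rw [e1, mul_pow, e2, pow_succ (-μ)]
      ring
    rw [tsum_congr hshift, tsum_mul_left]
    ring
end
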